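/- Given integers b_1, ..., b_r and q with gcd(b_1, ..., b_r, q) = 1, there exist integers λ_1, ..., λ_r such that gcd(Σ_{j=1}^r λ_j b_j, q) = 1. -/
import Mathlib

/-- Bézout for finite sets: the gcd of finitely many integers is an integer
combination of them. -/
lemma finset_gcd_is_combination {ι : Type*} [DecidableEq ι] (s : Finset ι) (b : ι → ℤ) :
    ∃ c : ι → ℤ, ∑ i ∈ s, c i * b i = s.gcd b := by
  induction s using Finset.induction_on with
  | empty => exact ⟨fun _ => 0, by simp⟩
  | @insert a s ha ih =>
    obtain ⟨c, hc⟩ := ih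
    refine ⟨fun i => if i = a then (b a).gcdA (s.gcd b)
      else (b a).gcdB (s.gcd b) * c i, ?_⟩
    rw [Finset.gcd_insert, ← Int.coe_gcd, Int.gcd_eq_gcd_ab,
      Finset.sum_insert ha]
    beta_reduce
    rw [if_pos rfl]
    have h2 : ∑ i ∈ s, (if i = a then (b a).gcdA (s.gcd b)
        else (b a).gcdB (s.gcd b) * c i) * b i
        = (b a).gcdB (s.gcd b) * ∑ i ∈ s, c i * b i := by
      rw [Finset.mul_sum]
      refine Finset.sum_congr rfl fun i hi => ?_
      rw [if_neg (by rintro rfl; exact ha hi), mul_assoc]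
    rw [h2, hc]
    ring

/-- Given integers `b₁, …, b_r` and `q ≥ 1` with `gcd(b₁, …, b_r, q) = 1`, there exist
integer weights `λ₁, …, λ_r` such that `gcd(Σⱼ λⱼ bⱼ, q) = 1`. -/
theorem exists_weights_coprime (r : ℕ) (hr : 1 ≤ r) (q : ℤ) (hq : 1 ≤ q)
    (b : Fin r → ℤ) (hgcd : Int.gcd (Finset.univ.gcd b) q = 1) :
    ∃ lam : Fin r → ℤ, Int.gcd (∑ j, lam j * b j) q = 1 := by
  obtain ⟨c, hc⟩ := finset_gcd_is_combination Finset.univ b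
  exact ⟨c, by rw [hc]; exact hgcd⟩
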